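/- Let B be a Büchi automaton over a finite alphabet Σ with state set Q, let k ≥ 2, let w1 and u be finite words over Σ with u nonempty, and let w2 be an ω-word over Σ. If w1 · u^{2·|Q|^k} · w2 ∈ L(B), then there exists K ∈ {1, …, |Q|} such that for every N ∈ {1, …, |Q|^{k−2}}, the ω-word w1 · u^{2·|Q|^k − K·N} · w2 belongs to L(B). -/
import Mathlib


namespace Stmt5

variable {Γ : Type*}

/-- `m`-fold concatenation of a finite word. -/
def lpow (u : List Γ) : ℕ → List Γ
  | 0 => []
  | m + 1 => u ++ lpow u m

/-- Concatenation of a finite word with an ω-word. -/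
def wcat (u : List Γ) (w : ℕ → Γ) : ℕ → Γ := fun n =>
  if h : n < u.length then u.get ⟨n, h⟩ else w (n - u.length)

/-- A Büchi automaton with states `Q` and alphabet `Γ`. -/
structure Buchi (Q Γ : Type*) where
  init : Q
  trans : Set (Q × Γ × Q)
  acc : Set Q

/-- `B` accepts the ω-word `w`: there is a run from the initial state,
respecting the transition relation, visiting accepting states infinitely often. -/
def Buchi.Accepts {Q Γ : Type*} (B : Buchi Q Γ) (w : ℕ → Γ) : Prop :=
  ∃ ρ : ℕ → Q, ρ 0 = B.init ∧ (∀ i, (ρ i, w i, ρ (i + 1)) ∈ B.trans) ∧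
    ∀ n, ∃ m, n ≤ m ∧ ρ m ∈ B.acc

lemma lpow_length (u : List Γ) (m : ℕ) : (lpow u m).length = m * u.length := by
  induction m with
  | zero => simp [lpow]
  | succ m ih => simp [lpow, ih]; ring

lemma lpow_add (u : List Γ) (a b : ℕ) : lpow u (a + b) = lpow u a ++ lpow u b := by
  induction a with
  | zero => simp [lpow]
  | succ a ih =>
    have : a + 1 + b = (a + b) + 1 := by ring
    rw [this]
    show u ++ lpow u (a + b) = (u ++ lpow u a) ++ lpow u b
    rw [ih, List.append_assoc]

lemma wcat_append (v x : List Γ) (w : ℕ → Γ) :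
    wcat (v ++ x) w = wcat v (wcat x w) := by
  funext n
  simp only [wcat, List.length_append]
  rcases lt_or_ge n v.length with h | h
  · rw [dif_pos (by omega), dif_pos h]
    simp [List.getElem_append, h]
  · rcases lt_or_ge n (v.length + x.length) with h2 | h2
    · rw [dif_pos h2, dif_neg (by omega), dif_pos (by omega)]
      simp only [List.get_eq_getElem]
      rw [List.getElem_append_right (by omega)]
    · rw [dif_neg (by omega), dif_neg (by omega), dif_neg (by omega)]
      congr 1
      omega

lemma wcat_lt (v : List Γ) (w : ℕ → Γ) (n : ℕ) (h : n < v.length) :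
    wcat v w n = v.get ⟨n, h⟩ := by simp [wcat, h]

lemma wcat_ge (v : List Γ) (w : ℕ → Γ) (n : ℕ) (h : v.length ≤ n) :
    wcat v w n = w (n - v.length) := by
  simp [wcat]; omega

lemma word_eq_lt (w1 u : List Γ) (w2 : ℕ → Γ) {m a K n : ℕ}
    (hm : a + K ≤ m) (hn : n < w1.length + a * u.length) :
    wcat (w1 ++ lpow u (m - K)) w2 n = wcat (w1 ++ lpow u m) w2 n := by
  obtain ⟨r, hr1, hr2⟩ : ∃ r, m - K = a + r ∧ m = a + (K + r) :=
    ⟨m - K - a, by omega, by omega⟩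
  have e1 : w1 ++ lpow u (m - K) = (w1 ++ lpow u a) ++ lpow u r := by
    rw [hr1, lpow_add, List.append_assoc]
  have e2 : w1 ++ lpow u m = (w1 ++ lpow u a) ++ lpow u (K + r) := by
    rw [hr2, lpow_add, List.append_assoc]
  have hl : n < (w1 ++ lpow u a).length := by
    rw [List.length_append, lpow_length]; omega
  rw [e1, e2, wcat_append (w1 ++ lpow u a) (lpow u r),
    wcat_append (w1 ++ lpow u a) (lpow u (K + r)),
    wcat_lt _ _ _ hl, wcat_lt _ _ _ hl]

lemma word_eq_ge (w1 u : List Γ) (w2 : ℕ → Γ) {m a K n : ℕ}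
    (hm : a + K ≤ m) (hn : w1.length + a * u.length ≤ n) :
    wcat (w1 ++ lpow u (m - K)) w2 n
      = wcat (w1 ++ lpow u m) w2 (n + K * u.length) := by
  obtain ⟨r, hr1, hr2⟩ : ∃ r, m - K = a + r ∧ m = a + (K + r) :=
    ⟨m - K - a, by omega, by omega⟩
  have hl : (w1 ++ lpow u a).length = w1.length + a * u.length := by
    rw [List.length_append, lpow_length]
  have e1 : w1 ++ lpow u (m - K) = (w1 ++ lpow u a) ++ lpow u r := by
    rw [hr1, lpow_add, List.append_assoc]
  have e2 : w1 ++ lpow u m = (w1 ++ lpow u a) ++ (lpow u K ++ lpow u r) := by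
    rw [hr2, lpow_add, lpow_add, List.append_assoc]
  rw [e1, e2, wcat_append (w1 ++ lpow u a) (lpow u r),
    wcat_append (w1 ++ lpow u a) (lpow u K ++ lpow u r),
    wcat_append (lpow u K) (lpow u r),
    wcat_ge _ _ _ (by rw [hl]; omega : (w1 ++ lpow u a).length ≤ n),
    wcat_ge _ _ _ (by rw [hl]; omega : (w1 ++ lpow u a).length ≤ n + K * u.length),
    wcat_ge (lpow u K) _ (n + K * u.length - (w1 ++ lpow u a).length)
      (by rw [lpow_length, hl]; omega)]
  congr 1
  rw [lpow_length, hl]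
  omega

lemma delete {Q : Type*} (B : Buchi Q Γ) (w1 u : List Γ) (w2 : ℕ → Γ)
    {m a K : ℕ} (hm : a + K ≤ m) (ρ : ℕ → Q)
    (htr : ∀ i, (ρ i, wcat (w1 ++ lpow u m) w2 i, ρ (i + 1)) ∈ B.trans)
    (hacc : ∀ n, ∃ m', n ≤ m' ∧ ρ m' ∈ B.acc)
    (hloop : ρ (w1.length + a * u.length) = ρ (w1.length + (a + K) * u.length)) :
    ∃ ρ' : ℕ → Q,
      (∀ i, (ρ' i, wcat (w1 ++ lpow u (m - K)) w2 i, ρ' (i + 1)) ∈ B.trans) ∧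
      (∀ n, ∃ m', n ≤ m' ∧ ρ' m' ∈ B.acc) ∧
      (∀ n, n ≤ w1.length + a * u.length → ρ' n = ρ n) := by
  set p := w1.length + a * u.length with hp
  refine ⟨fun n => if n < p then ρ n else ρ (n + K * u.length), ?_, ?_, ?_⟩
  · intro i
    rcases lt_or_ge (i + 1) p with h | h
    · simp only [if_pos (by omega : i < p), if_pos h]
      rw [word_eq_lt w1 u w2 hm (by omega)]
      exact htr i
    · rcases lt_or_ge i p with h2 | h2
      · have hip : i + 1 = p := by omega
        simp only [if_pos h2, if_neg (by omega : ¬ i + 1 < p)]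
        rw [word_eq_lt w1 u w2 hm h2, hip]
        have : p + K * u.length = w1.length + (a + K) * u.length := by
          rw [hp]; ring
        rw [this, ← hloop, ← hip]
        exact htr i
      · simp only [if_neg (by omega : ¬ i < p), if_neg (by omega : ¬ i + 1 < p)]
        rw [word_eq_ge w1 u w2 hm h2]
        have : i + 1 + K * u.length = (i + K * u.length) + 1 := by ring
        rw [this]
        exact htr (i + K * u.length)
  · intro n
    obtain ⟨m', hm', hacc'⟩ := hacc (n + p + K * u.length)
    refine ⟨m' - K * u.length, by omega, ?_⟩
    simp only [if_neg (by omega : ¬ m' - K * u.length < p)]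
    have : m' - K * u.length + K * u.length = m' := by omega
    rw [this]; exact hacc'
  · intro n hn
    rcases lt_or_ge n p with h | h
    · simp [h]
    · have hn' : n = p := by omega
      simp only [if_neg (by omega : ¬ n < p), hn']
      have : p + K * u.length = w1.length + (a + K) * u.length := by
        rw [hp]; ring
      rw [this, ← hloop]
      simp

lemma pump_many {Q : Type*} (B : Buchi Q Γ) (w1 u : List Γ) (w2 : ℕ → Γ) (K : ℕ) :
    ∀ (N m : ℕ) (A : Finset ℕ) (ρ : ℕ → Q),
      N ≤ A.card →
      (∀ a ∈ A, a + K ≤ m) →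
      (∀ a ∈ A, ∀ b ∈ A, a < b → a + K ≤ b) →
      ρ 0 = B.init →
      (∀ i, (ρ i, wcat (w1 ++ lpow u m) w2 i, ρ (i + 1)) ∈ B.trans) →
      (∀ n, ∃ m', n ≤ m' ∧ ρ m' ∈ B.acc) →
      (∀ a ∈ A, ρ (w1.length + a * u.length)
        = ρ (w1.length + (a + K) * u.length)) →
      B.Accepts (wcat (w1 ++ lpow u (m - K * N)) w2)
  | 0, m, A, ρ, _, _, _, h0, htr, hacc, _ => by
    refine ⟨ρ, h0, ?_, hacc⟩
    simpa using htr
  | (N + 1), m, A, ρ, hcard, hbd, hdisj, h0, htr, hacc, hloop => by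
    have hA : A.Nonempty := Finset.card_pos.mp (by omega)
    set a := A.max' hA with ha
    have haA : a ∈ A := A.max'_mem hA
    obtain ⟨ρ', htr', hacc', heq⟩ :=
      delete B w1 u w2 (hbd a haA) ρ htr hacc (hloop a haA)
    have hstep : ∀ b ∈ A.erase a, b + K ≤ a := by
      intro b hb
      have hbA := Finset.mem_of_mem_erase hb
      have hne := Finset.ne_of_mem_erase hb
      exact hdisj b hbA a haA (lt_of_le_of_ne (A.le_max' b hbA) hne)
    have key : B.Accepts (wcat (w1 ++ lpow u (m - K - K * N)) w2) := by
      refine pump_many B w1 u w2 K N (m - K) (A.erase a) ρ' ?_ ?_ ?_ ?_ htr' hacc' ?_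
      · have := Finset.card_erase_of_mem haA
        omega
      · intro b hb
        have h1 := hstep b hb
        have h2 := hbd a haA
        omega
      · intro b hb c hc hbc
        exact hdisj b (Finset.mem_of_mem_erase hb) c (Finset.mem_of_mem_erase hc) hbc
      · rw [heq 0 (by omega)]; exact h0
      · intro b hb
        have h1 := hstep b hb
        rw [heq _ (by nlinarith [Nat.zero_le (b * u.length)] : w1.length + b * u.length ≤ w1.length + a * u.length),
          heq _ (by nlinarith : w1.length + (b + K) * u.length ≤ w1.length + a * u.length)]
        exact hloop b (Finset.mem_of_mem_erase hb)
    have : m - K - K * N = m - K * (N + 1) := by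
      rw [Nat.sub_sub]
      congr 1
      ring
    rwa [this] at key

/-- Pumping down iterations of `u`: if `w1 · u^(2·|Q|^k) · w2 ∈ L(B)` and
`k ≥ 2`, then for some `K ∈ [1, |Q|]` and all `N ∈ [1, |Q|^(k-2)]`,
`w1 · u^(2·|Q|^k - K·N) · w2 ∈ L(B)`. -/
theorem buchi_pump {Q Γ : Type*} [Fintype Q] [Fintype Γ] (B : Buchi Q Γ)
    (k : ℕ) (hk : 2 ≤ k) (w1 u : List Γ) (hu : u ≠ []) (w2 : ℕ → Γ)
    (h : B.Accepts (wcat (w1 ++ lpow u (2 * Fintype.card Q ^ k)) w2)) :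
    ∃ K, 1 ≤ K ∧ K ≤ Fintype.card Q ∧
      ∀ N, 1 ≤ N → N ≤ Fintype.card Q ^ (k - 2) →
        B.Accepts (wcat (w1 ++ lpow u (2 * Fintype.card Q ^ k - K * N)) w2) := by
  obtain ⟨ρ, h0, htr, hacc⟩ := h
  have hne : Nonempty Q := ⟨ρ 0⟩
  set c := Fintype.card Q with hc
  have hc0 : 0 < c := Fintype.card_pos
  -- in each chunk of c+1 block boundaries, two states coincide
  have hchunk : ∀ i : ℕ, ∃ a K' : ℕ,
      i * c ≤ a ∧ 1 ≤ K' ∧ a + K' ≤ i * c + c ∧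
      ρ (w1.length + a * u.length) = ρ (w1.length + (a + K') * u.length) := by
    intro i
    have hcard : (Finset.univ : Finset Q).card
        < (Finset.Icc (i * c) (i * c + c)).card := by
      rw [Nat.card_Icc, Finset.card_univ, ← hc]
      omega
    obtain ⟨x, hx, y, hy, hxy, hfxy⟩ :=
      Finset.exists_ne_map_eq_of_card_lt_of_maps_to hcard
        (fun j _ => Finset.mem_univ (ρ (w1.length + j * u.length)))
    rw [Finset.mem_Icc] at hx hy
    rcases lt_or_gt_of_ne hxy with hlt | hlt
    · refine ⟨x, y - x, by omega, by omega, by omega, ?_⟩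
      have hxy' : x + (y - x) = y := by omega
      rw [hfxy, hxy']
    · refine ⟨y, x - y, by omega, by omega, by omega, ?_⟩
      have hxy' : y + (x - y) = x := by omega
      rw [← hfxy, hxy']
  choose a g ha1 hg1 hag hloop using hchunk
  -- pigeonhole on the gap values over c^(k-1) chunks
  have hmaps : ∀ i ∈ Finset.range (c ^ (k - 1)), g i ∈ Finset.Icc 1 c := by
    intro i _
    rw [Finset.mem_Icc]
    have h1 := ha1 i
    have h2 := hag i
    constructor
    · exact hg1 i
    · omega
  have hcount : (Finset.Icc 1 c).card * c ^ (k - 2)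
      ≤ (Finset.range (c ^ (k - 1))).card := by
    rw [Nat.card_Icc, Finset.card_range]
    have h1 : c + 1 - 1 = c := by omega
    have h2 : c * c ^ (k - 2) = c ^ (k - 1) := by
      rw [← pow_succ']
      congr 1
      omega
    rw [h1, h2]
  obtain ⟨K, hKmem, hKcard⟩ :=
    Finset.exists_le_card_fiber_of_mul_le_card_of_maps_to hmaps
      ⟨1, Finset.mem_Icc.mpr ⟨le_refl 1, hc0⟩⟩ hcount
  rw [Finset.mem_Icc] at hKmem
  refine ⟨K, hKmem.1, hKmem.2, ?_⟩
  intro N hN1 hN2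
  set F := {i ∈ Finset.range (c ^ (k - 1)) | g i = K} with hF
  -- elements of F give disjoint loops of gap K
  have hFprop : ∀ i ∈ F, i < c ^ (k - 1) ∧ g i = K := by
    intro i hi
    rw [hF, Finset.mem_filter, Finset.mem_range] at hi
    exact hi
  have hmono : ∀ i ∈ F, ∀ j ∈ F, i < j → a i + K ≤ a j := by
    intro i hi j hj hij
    have h1 := hag i
    have h2 := ha1 j
    have h3 := (hFprop i hi).2
    have h4 : (i + 1) * c ≤ j * c := Nat.mul_le_mul_right c (by omega)
    have h5 : i * c + c = (i + 1) * c := by ring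
    omega
  have hinj : Set.InjOn a F := by
    intro i hi j hj hij
    by_contra hne
    rcases lt_or_gt_of_ne hne with hlt | hlt
    · have := hmono i hi j hj hlt
      have := hKmem.1
      omega
    · have := hmono j hj i hi hlt
      have := hKmem.1
      omega
  have hbound : ∀ i ∈ F, a i + K ≤ 2 * c ^ k := by
    intro i hi
    have h1 := hag i
    have h2 := (hFprop i hi).1
    have h3 := (hFprop i hi).2
    have h4 : (i + 1) * c ≤ c ^ (k - 1) * c := Nat.mul_le_mul_right c (by omega)
    have h5 : c ^ (k - 1) * c = c ^ k := by
      rw [← pow_succ]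
      congr 1
      omega
    have h6 : i * c + c = (i + 1) * c := by ring
    omega
  refine pump_many B w1 u w2 K N (2 * c ^ k) (F.image a) ρ ?_ ?_ ?_ h0 htr hacc ?_
  · rw [Finset.card_image_of_injOn hinj]
    omega
  · intro x hx
    obtain ⟨i, hi, rfl⟩ := Finset.mem_image.mp hx
    exact hbound i hi
  · intro x hx y hy hxy
    obtain ⟨i, hi, rfl⟩ := Finset.mem_image.mp hx
    obtain ⟨j, hj, rfl⟩ := Finset.mem_image.mp hy
    have hij : i < j := by
      by_contra hcon
      rcases Nat.lt_or_ge j i with hlt | hge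
      · have := hmono j hj i hi hlt
        omega
      · have hij' : i = j := by omega
        rw [hij'] at hxy
        exact absurd hxy (lt_irrefl _)
    exact hmono i hi j hj hij
  · intro x hx
    obtain ⟨i, hi, rfl⟩ := Finset.mem_image.mp hx
    rw [← (hFprop i hi).2]
    exact hloop i


end Stmt5
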